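/- Let σ > 0 and let (x,y) : [0,∞) → ℝ_{>0} × ℝ be a differentiable solution of x' = 2y², y' = σ x^{−1/2}. Then there exists t₁ ≥ 0 such that y(t) > 0 for all t > t₁. -/

import Mathlib

theorem stmt15 (σ : ℝ) (hσ : 0 < σ) (x y : ℝ → ℝ)
    (hpos : ∀ t ∈ Set.Ici (0 : ℝ), 0 < x t)
    (hx : ∀ t ∈ Set.Ici (0 : ℝ),
      HasDerivWithinAt x (2 * (y t) ^ 2) (Set.Ici (0 : ℝ)) t)
    (hy : ∀ t ∈ Set.Ici (0 : ℝ),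
      HasDerivWithinAt y (σ / Real.sqrt (x t)) (Set.Ici (0 : ℝ)) t) :
    ∃ t₁ ≥ (0 : ℝ), ∀ t > t₁, 0 < y t := by
  have hyc : ContinuousOn y (Set.Ici 0) := fun t ht => (hy t ht).continuousWithinAt
  have hxc : ContinuousOn x (Set.Ici 0) := fun t ht => (hx t ht).continuousWithinAt
  have hymono : StrictMonoOn y (Set.Ici 0) := by
    apply strictMonoOn_of_hasDerivWithinAt_pos (convex_Ici 0) hyc
      (f' := fun t => σ / Real.sqrt (x t))
    · intro t ht
      rw [interior_Ici] at ht ⊢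
      exact (hy t (Set.Ioi_subset_Ici_self ht)).mono Set.Ioi_subset_Ici_self
    · intro t ht
      rw [interior_Ici] at ht
      exact div_pos hσ (Real.sqrt_pos.2 (hpos t (Set.Ioi_subset_Ici_self ht)))
  by_cases h : ∃ t₀ ∈ Set.Ici (0 : ℝ), 0 < y t₀
  · obtain ⟨t₀, ht₀, hy₀⟩ := h
    exact ⟨t₀, ht₀, fun t ht => lt_trans hy₀ (hymono ht₀ (le_trans ht₀ ht.le) ht)⟩
  exfalso
  push_neg at h
  have hneg : ∀ t ∈ Set.Ici (0 : ℝ), y t ≤ 0 := h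
  have hy0 : y 0 < 0 := by
    rcases lt_or_eq_of_le (hneg 0 Set.self_mem_Ici) with h' | h'
    · exact h'
    · have := hymono (Set.self_mem_Ici) (by norm_num : (1:ℝ) ∈ Set.Ici (0:ℝ)) one_pos
      rw [h'] at this
      exact absurd (hneg 1 (by norm_num)) (not_le.2 this)
  set C : ℝ := 2 * (y 0) ^ 2 with hCdef
  have hC : 0 < C := by have : y 0 ≠ 0 := hy0.ne; positivity
  -- x t ≤ x 0 + C * t on Ici 0
  have hxle : ∀ t ∈ Set.Ici (0 : ℝ), x t ≤ x 0 + C * t := by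
    have hmono : MonotoneOn (fun t => x 0 + C * t - x t) (Set.Ici 0) := by
      apply monotoneOn_of_hasDerivWithinAt_nonneg (convex_Ici 0)
        (f' := fun t => C - 2 * (y t) ^ 2)
      · exact (continuousOn_const.add (continuousOn_const.mul continuousOn_id)).sub hxc
      · intro t ht
        rw [interior_Ici] at ht ⊢
        have h1 : HasDerivWithinAt (fun t : ℝ => x 0 + C * t) (C) (Set.Ioi 0) t := by
          simpa using ((hasDerivAt_id t).const_mul C).hasDerivWithinAt.const_add (x 0)
        exact h1.sub ((hx t (Set.Ioi_subset_Ici_self ht)).mono Set.Ioi_subset_Ici_self)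
      · intro t ht
        rw [interior_Ici] at ht
        have h1 : y 0 ≤ y t := (hymono.monotoneOn) Set.self_mem_Ici (Set.Ioi_subset_Ici_self ht) (le_of_lt ht)
        have h2 : y t ≤ 0 := hneg t (Set.Ioi_subset_Ici_self ht)
        have h3 : (y t) ^ 2 ≤ (-(y 0)) ^ 2 := by
          apply sq_le_sq'
          · simpa using h1
          · linarith
        have h4 : (-(y 0)) ^ 2 = (y 0) ^ 2 := by ring
        rw [h4] at h3
        simp only [hCdef]
        linarith
    intro t ht
    have := hmono Set.self_mem_Ici ht ht
    simp only [mul_zero, add_zero] at this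
    linarith
  -- the comparison function g
  set g : ℝ → ℝ := fun t => 2 * σ / C * (Real.sqrt (x 0 + C * t) - Real.sqrt (x 0)) with hgdef
  have hxlin_pos : ∀ t ∈ Set.Ici (0 : ℝ), 0 < x 0 + C * t := fun t ht => by
    have := hpos 0 Set.self_mem_Ici
    have : 0 ≤ C * t := mul_nonneg hC.le ht
    nlinarith [hpos 0 Set.self_mem_Ici]
  have hg : ∀ t ∈ Set.Ici (0 : ℝ),
      HasDerivWithinAt g (σ / Real.sqrt (x 0 + C * t)) (Set.Ici 0) t := by
    intro t ht
    have hne : x 0 + C * t ≠ 0 := (hxlin_pos t ht).ne'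
    have h1 : HasDerivWithinAt (fun t : ℝ => x 0 + C * t) C (Set.Ici 0) t := by
      simpa using ((hasDerivAt_id t).const_mul C).hasDerivWithinAt.const_add (x 0)
    have h2 := ((h1.sqrt hne).sub_const (Real.sqrt (x 0))).const_mul (2 * σ / C)
    convert h2 using 1
    have hs : Real.sqrt (x 0 + C * t) ≠ 0 := Real.sqrt_ne_zero'.2 (hxlin_pos t ht)
    · rfl
    · rfl
    field_simp
  -- y - g is monotone
  have hmono2 : MonotoneOn (fun t => y t - g t) (Set.Ici 0) := by
    apply monotoneOn_of_hasDerivWithinAt_nonneg (convex_Ici 0)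
      (f' := fun t => σ / Real.sqrt (x t) - σ / Real.sqrt (x 0 + C * t))
    · exact hyc.sub (fun t ht => (hg t ht).continuousWithinAt)
    · intro t ht
      rw [interior_Ici] at ht ⊢
      exact (((hy t (Set.Ioi_subset_Ici_self ht)).sub (hg t (Set.Ioi_subset_Ici_self ht))).mono Set.Ioi_subset_Ici_self)
    · intro t ht
      rw [interior_Ici] at ht
      have hxt : 0 < x t := hpos t (Set.Ioi_subset_Ici_self ht)
      have hle : Real.sqrt (x t) ≤ Real.sqrt (x 0 + C * t) :=
        Real.sqrt_le_sqrt (hxle t (Set.Ioi_subset_Ici_self ht))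
      have hsp : 0 < Real.sqrt (x t) := Real.sqrt_pos.2 hxt
      have : σ / Real.sqrt (x 0 + C * t) ≤ σ / Real.sqrt (x t) := by
        gcongr
      linarith
  -- choose a large time T
  set S : ℝ := Real.sqrt (x 0) + C / (2 * σ) * (-(y 0)) + 1 with hSdef
  have hterm : 0 ≤ C / (2 * σ) * (-(y 0)) := mul_nonneg (by positivity) (by linarith)
  have hS0 : Real.sqrt (x 0) ≤ S := by simp only [hSdef]; linarith
  have hSnn : 0 ≤ S := le_trans (Real.sqrt_nonneg _) hS0
  set T : ℝ := (S ^ 2 - x 0) / C with hTdef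
  have hx0S : x 0 ≤ S ^ 2 := by
    have := Real.sq_sqrt (hpos 0 Set.self_mem_Ici).le
    nlinarith [Real.sqrt_nonneg (x 0)]
  have hT : 0 ≤ T := div_nonneg (by linarith) hC.le
  have hxT : x 0 + C * T = S ^ 2 := by
    rw [hTdef]
    field_simp
    ring
  have hgT : g T = -(y 0) + 2 * σ / C := by
    simp only [hgdef, hxT, Real.sqrt_sq hSnn]
    rw [hSdef]
    field_simp
    ring
  have hcomp : y 0 - g 0 ≤ y T - g T := hmono2 Set.self_mem_Ici hT hT
  have hg0 : g 0 = 0 := by simp [hgdef]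
  rw [hg0] at hcomp
  have : 0 < y T := by
    rw [hgT] at hcomp
    have : 0 < 2 * σ / C := by positivity
    linarith
  exact absurd (hneg T hT) (not_le.2 this)
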